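/- Let f be a nonzero skew polynomial in F_{q^m}[x; σ] (zero derivation), let a_1, ..., a_ℓ be representatives of pairwise distinct nontrivial (σ,0)-conjugacy classes of F_{q^m}, and for each i let ζ^{(i)}_1, ..., ζ^{(i)}_{n_i} ∈ F_{q^m} be F_q-linearly independent. If the generalized operator evaluation f(ζ^{(i)}_j)_{a_i} := Σ_r f_r D_{a_i}^r(ζ^{(i)}_j) vanishes for all 1 ≤ j ≤ n_i and all 1 ≤ i ≤ ℓ, then deg(f) ≥ n_1 + ... + n_ℓ. -/

import Mathlib

/-- Iterated generalized operator `D_a^r(b)` for zero derivation: `D_a(b) = σ(b)·a`. -/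
def Dit {F : Type*} [Field F] (σ : F ≃+* F) (a b : F) : ℕ → F
  | 0 => b
  | r + 1 => σ (Dit σ a b r) * a

/-- Generalized operator evaluation of a skew polynomial (given by its coefficients)
at `b` with respect to evaluation parameter `a`. -/
noncomputable def opev {F : Type*} [Field F] (σ : F ≃+* F) (f : Polynomial F)
    (a b : F) : F :=
  ∑ r ∈ f.support, f.coeff r * Dit σ a b r

section Aux
variable {F : Type*} [Field F] (σ : F ≃+* F)

lemma Dit_zero_b (a : F) : ∀ r, Dit σ a 0 r = 0
  | 0 => rfl
  | r + 1 => by simp [Dit, Dit_zero_b a r]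

lemma Dit_add (a u v : F) : ∀ r, Dit σ a (u + v) r = Dit σ a u r + Dit σ a v r
  | 0 => rfl
  | r + 1 => by simp [Dit, Dit_add a u v r, add_mul]

lemma Dit_mul (a c b : F) : ∀ r, Dit σ a (c * b) r = σ^[r] c * Dit σ a b r
  | 0 => by simp [Dit]
  | r + 1 => by
      simp [Dit, Dit_mul a c b r, Function.iterate_succ_apply', mul_assoc]

lemma Dit_shift (a b : F) : ∀ r, Dit σ a b (r + 1) = Dit σ a (σ b * a) r
  | 0 => rfl
  | r + 1 => by
      have : Dit σ a b (r + 1 + 1) = σ (Dit σ a b (r + 1)) * a := rfl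
      rw [this, Dit_shift a b r]; rfl

lemma opev_eq_range (f : Polynomial F) (a b : F) {m : ℕ} (hm : f.natDegree ≤ m) :
    opev σ f a b = ∑ r ∈ Finset.range (m + 1), f.coeff r * Dit σ a b r := by
  rw [opev]
  refine Finset.sum_subset ?_ ?_
  · intro r hr
    exact Finset.mem_range.mpr
      (lt_of_le_of_lt (Polynomial.le_natDegree_of_mem_supp r hr) (by omega))
  · intro r _ hr
    simp [Polynomial.notMem_support_iff.mp hr]

lemma opev_b_add (f : Polynomial F) (a u v : F) :
    opev σ f a (u + v) = opev σ f a u + opev σ f a v := by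
  simp [opev, Dit_add, mul_add, Finset.sum_add_distrib]

lemma opev_b_zero (f : Polynomial F) (a : F) : opev σ f a 0 = 0 := by
  simp [opev, Dit_zero_b]

lemma opev_add (p q : Polynomial F) (a b : F) :
    opev σ (p + q) a b = opev σ p a b + opev σ q a b := by
  have h1 : (p + q).natDegree ≤ max p.natDegree q.natDegree := Polynomial.natDegree_add_le p q
  rw [opev_eq_range σ (p+q) a b h1, opev_eq_range σ p a b (le_max_left _ _),
    opev_eq_range σ q a b (le_max_right _ _), ← Finset.sum_add_distrib]
  exact Finset.sum_congr rfl fun r _ => by rw [Polynomial.coeff_add, add_mul]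

end Aux

section Div
variable {F : Type*} [Field F] (σ : F ≃+* F)

lemma skew_div (c : F) : ∀ (n : ℕ) (f : Polynomial F), f.natDegree ≤ n →
    ∃ (g : Polynomial F) (ρ : F),
      g.natDegree ≤ n - 1 ∧
      (∀ r, g.coeff r = f.coeff (r + 1) + g.coeff (r + 1) * σ^[r + 1] c) ∧
      (∀ a b, opev σ f a b = opev σ g a (σ b * a - c * b) + ρ * b) := by
  intro n
  induction n with
  | zero =>
    intro f hfd
    refine ⟨0, f.coeff 0, by simp, ?_, ?_⟩
    · intro r
      rw [Polynomial.coeff_eq_zero_of_natDegree_lt (by omega : f.natDegree < r + 1)]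
      simp
    · intro a b
      rw [opev_eq_range σ f a b hfd]
      simp [Dit, opev, Polynomial.support_zero]
  | succ n IH =>
    intro f hfd
    set h := f.divX with hh
    have hhd : h.natDegree ≤ n := by
      rw [hh, Polynomial.natDegree_divX_eq_natDegree_tsub_one]; omega
    set ftil : Polynomial F :=
      (∑ r ∈ Finset.range (n + 1), Polynomial.C (h.coeff r * σ^[r] c) * Polynomial.X ^ r)
        + Polynomial.C (f.coeff 0) with hftil
    have hftc : ∀ r, ftil.coeff r = h.coeff r * σ^[r] c + (if r = 0 then f.coeff 0 else 0) := by
      intro r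
      rw [hftil, Polynomial.coeff_add, Polynomial.finset_sum_coeff]
      congr 1
      · rw [Finset.sum_congr rfl (fun s _ => Polynomial.coeff_C_mul_X_pow (h.coeff s * σ^[s] c) s r)]
        by_cases hr : r < n + 1
        · rw [Finset.sum_ite_eq (Finset.range (n+1)) r]
          simp [hr]
        · have h1 : h.coeff r = 0 :=
            Polynomial.coeff_eq_zero_of_natDegree_lt (by omega)
          rw [Finset.sum_ite_eq (Finset.range (n+1)) r]
          simp [hr, h1]
      · simp [Polynomial.coeff_C]
    have hftd : ftil.natDegree ≤ n := by
      rw [Polynomial.natDegree_le_iff_coeff_eq_zero]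
      intro N hN
      rw [hftc N, Polynomial.coeff_eq_zero_of_natDegree_lt (by omega : h.natDegree < N)]
      simp; omega
    obtain ⟨gt, ρ, hgtd, hgtrec, hgtid⟩ := IH ftil hftd
    refine ⟨h + gt, ρ, ?_, ?_, ?_⟩
    · refine le_trans (Polynomial.natDegree_add_le h gt) ?_
      simp only [max_le_iff]
      omega
    · intro r
      rw [Polynomial.coeff_add, Polynomial.coeff_add, hgtrec r, hftc (r + 1)]
      rw [Polynomial.coeff_divX, Polynomial.coeff_divX]
      simp [add_mul]
    · intro a b
      have key1 : opev σ f a b = opev σ h a (σ b * a) + f.coeff 0 * b := by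
        rw [opev_eq_range σ f a b (show f.natDegree ≤ n + 1 from hfd),
          opev_eq_range σ h a (σ b * a) hhd, Finset.sum_range_succ']
        have hc : ∀ r ∈ Finset.range (n + 1),
            f.coeff (r + 1) * Dit σ a b (r + 1) = h.coeff r * Dit σ a (σ b * a) r := by
          intro r _
          rw [Dit_shift, Polynomial.coeff_divX]
        rw [Finset.sum_congr rfl hc]
        rfl
      have key2 : opev σ ftil a b = opev σ h a (c * b) + f.coeff 0 * b := by
        rw [opev_eq_range σ ftil a b hftd, opev_eq_range σ h a (c * b) hhd]
        have : ∀ r ∈ Finset.range (n + 1), ftil.coeff r * Dit σ a b r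
            = h.coeff r * Dit σ a (c * b) r + (if r = 0 then f.coeff 0 * b else 0) := by
          intro r _
          rw [hftc r, Dit_mul, add_mul]
          congr 1
          · ring
          · by_cases hr : r = 0 <;> simp [hr, Dit]
        rw [Finset.sum_congr rfl this, Finset.sum_add_distrib,
          Finset.sum_ite_eq' (Finset.range (n+1)) 0 (fun _ => f.coeff 0 * b)]
        simp
      have key3 : σ b * a = (σ b * a - c * b) + c * b := by ring
      calc opev σ f a b = opev σ h a (σ b * a) + f.coeff 0 * b := key1
        _ = opev σ h a (σ b * a - c * b) + (opev σ h a (c * b) + f.coeff 0 * b) := by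
            rw [key3, opev_b_add]; ring
        _ = opev σ h a (σ b * a - c * b) + opev σ ftil a b := by rw [key2]
        _ = opev σ h a (σ b * a - c * b) + (opev σ gt a (σ b * a - c * b) + ρ * b) := by
            rw [hgtid a b]
        _ = opev σ (h + gt) a (σ b * a - c * b) + ρ * b := by rw [opev_add]; ring

end Div

section Main
variable {F : Type*} [Field F] (σ : F ≃+* F)

lemma sum_drop {m n : ℕ} (h : m ≤ n) (φ : Fin m → F) (ψ : Fin n → F) :
    ∑ j : Fin n, (if hj : (j : ℕ) < m then φ ⟨j, hj⟩ else 0) * ψ j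
      = ∑ j : Fin m, φ j * ψ (Fin.castLE h j) := by
  set G : ℕ → F := fun j =>
    (if hj : j < m then φ ⟨j, hj⟩ else 0) * (if hj : j < n then ψ ⟨j, hj⟩ else 0) with hG
  have h1 : ∑ j : Fin n, (if hj : (j : ℕ) < m then φ ⟨j, hj⟩ else 0) * ψ j
      = ∑ j ∈ Finset.range n, G j := by
    rw [← Fin.sum_univ_eq_sum_range]
    refine Finset.sum_congr rfl fun j _ => ?_
    rw [hG]
    simp only [j.isLt, dif_pos, Fin.eta]
  have h2 : ∑ j : Fin m, φ j * ψ (Fin.castLE h j) = ∑ j ∈ Finset.range m, G j := by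
    rw [← Fin.sum_univ_eq_sum_range]
    refine Finset.sum_congr rfl fun j _ => ?_
    rw [hG]
    simp only [j.isLt, lt_of_lt_of_le j.isLt h, dif_pos, Fin.eta]
    rfl
  rw [h1, h2]
  refine (Finset.sum_subset (Finset.range_subset_range.mpr h) ?_).symm
  intro j _ hj
  simp only [Finset.mem_range, not_lt] at hj
  simp only [hG]
  rw [dif_neg (by omega), zero_mul]

end Main

theorem stmt_7 (F : Type*) [Field F] [Fintype F] (σ : F ≃+* F)
    (f : Polynomial F) (hf : f ≠ 0)
    (ℓ : ℕ) (nv : Fin ℓ → ℕ) (a : Fin ℓ → F)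
    (ha0 : ∀ i, a i ≠ 0)
    (hconj : ∀ i i' : Fin ℓ, i ≠ i' →
      ¬ ∃ c : F, c ≠ 0 ∧ σ c * a i * c⁻¹ = a i')
    (ζ : ∀ i : Fin ℓ, Fin (nv i) → F)
    (hζ : ∀ i (c : Fin (nv i) → F), (∀ j, σ (c j) = c j) →
      (∑ j, c j * ζ i j) = 0 → ∀ j, c j = 0)
    (hvanish : ∀ i j, opev σ f (a i) (ζ i j) = 0) :
    (∑ i, nv i) ≤ f.natDegree := by
  suffices H : ∀ n : ℕ, ∀ f : Polynomial F, f ≠ 0 → ∀ (nv : Fin ℓ → ℕ)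
      (ζ : ∀ i : Fin ℓ, Fin (nv i) → F),
      (∀ i (c : Fin (nv i) → F), (∀ j, σ (c j) = c j) →
        (∑ j, c j * ζ i j) = 0 → ∀ j, c j = 0) →
      (∀ i j, opev σ f (a i) (ζ i j) = 0) →
      (∑ i, nv i) = n → n ≤ f.natDegree by
    exact H _ f hf nv ζ hζ hvanish rfl
  intro n
  induction n with
  | zero => intro f _ nv ζ _ _ _; exact Nat.zero_le _
  | succ n IH =>
    intro f hf nv ζ hζ hvanish hsum
    -- pick a class with a point
    have hex : ∃ i₀, nv i₀ ≠ 0 := by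
      by_contra hall
      push_neg at hall
      simp only [hall, Finset.sum_const_zero] at hsum
      omega
    obtain ⟨i₀, hi₀⟩ := hex
    obtain ⟨k, hk⟩ : ∃ k, nv i₀ = k + 1 := ⟨nv i₀ - 1, by omega⟩
    have hklt : k < nv i₀ := by omega
    set ζl : F := ζ i₀ ⟨k, hklt⟩ with hζl
    have hζl0 : ζl ≠ 0 := by
      intro h0
      have hsum1 : ∑ j : Fin (nv i₀), (if (j : ℕ) = k then (1:F) else 0) * ζ i₀ j = 0 := by
        rw [Finset.sum_eq_single (⟨k, hklt⟩ : Fin (nv i₀))]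
        · rw [← hζl, h0, mul_zero]
        · intro j _ hj
          have hne : (j : ℕ) ≠ k := fun hc => hj (Fin.ext hc)
          simp [hne]
        · simp
      have h1 := hζ i₀ (fun j => if (j : ℕ) = k then (1:F) else 0)
        (fun j => by by_cases hj : (j : ℕ) = k <;> simp [hj]) hsum1 ⟨k, hklt⟩
      simp at h1
    have hσζl0 : σ ζl ≠ 0 := fun h0 => hζl0 (σ.injective (by rw [h0, map_zero]))
    -- degree at least 1
    have hd1 : 1 ≤ f.natDegree := by
      by_contra hd
      push_neg at hd
      have hv := hvanish i₀ ⟨k, hklt⟩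
      rw [opev_eq_range σ f _ _ (show f.natDegree ≤ 0 by omega)] at hv
      simp only [zero_add, Finset.sum_range_one] at hv
      have hc0 : f.coeff 0 = 0 := by
        rcases mul_eq_zero.mp hv with h | h
        · exact h
        · exact absurd h hζl0
      refine hf ?_
      have heq := Polynomial.eq_C_of_natDegree_le_zero (show f.natDegree ≤ 0 by omega)
      rw [heq, hc0, map_zero]
    set d := f.natDegree with hd
    set c : F := σ ζl * a i₀ * ζl⁻¹ with hc
    obtain ⟨g, ρ, hgdeg, hgrec, hgid⟩ := skew_div σ c d f le_rfl
    have hT0 : σ ζl * a i₀ - c * ζl = 0 := by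
      rw [hc]; field_simp; simp
    have hρ : ρ = 0 := by
      have h1 := hgid (a i₀) ζl
      rw [hT0, hvanish i₀ ⟨k, hklt⟩, opev_b_zero, zero_add] at h1
      exact (mul_eq_zero.mp h1.symm).resolve_right hζl0
    have hgid' : ∀ A b, opev σ f A b = opev σ g A (σ b * A - c * b) := by
      intro A b
      rw [hgid A b, hρ, zero_mul, add_zero]
    -- g ≠ 0
    have hgtop : g.coeff (d - 1) = f.coeff d := by
      have hr := hgrec (d - 1)
      have hz : g.coeff (d - 1 + 1) = 0 :=
        Polynomial.coeff_eq_zero_of_natDegree_lt (by omega)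
      rw [hz, zero_mul, add_zero] at hr
      rw [hr, Nat.sub_add_cancel hd1]
    have hg0 : g ≠ 0 := by
      intro h0
      rw [h0, Polynomial.coeff_zero] at hgtop
      exact (Polynomial.leadingCoeff_ne_zero.mpr hf) hgtop.symm
    -- new data
    set nv' : Fin ℓ → ℕ := Function.update nv i₀ k with hnv'
    have hle : ∀ i, nv' i ≤ nv i := by
      intro i
      by_cases hi : i = i₀
      · rw [hi, hnv', Function.update_self]; omega
      · rw [hnv', Function.update_of_ne hi]
    set ζ' : ∀ i : Fin ℓ, Fin (nv' i) → F :=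
      fun i j => σ (ζ i (Fin.castLE (hle i) j)) * a i - c * ζ i (Fin.castLE (hle i) j) with hζ'def
    have hsum' : ∑ i, nv' i = n := by
      rw [hnv', Finset.sum_update_of_mem (Finset.mem_univ i₀),
        Finset.sdiff_singleton_eq_erase]
      have h3 : nv i₀ + ∑ x ∈ Finset.univ.erase i₀, nv x = ∑ i, nv i :=
        Finset.add_sum_erase _ nv (Finset.mem_univ i₀)
      omega
    have hvanish' : ∀ i j, opev σ g (a i) (ζ' i j) = 0 := by
      intro i j
      rw [hζ'def]
      rw [← hgid' (a i) (ζ i (Fin.castLE (hle i) j))]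
      exact hvanish i _
    have hnvk : nv' i₀ = k := by rw [hnv']; exact Function.update_self i₀ k nv
    have hζ'indep : ∀ i (cc : Fin (nv' i) → F), (∀ j, σ (cc j) = cc j) →
        (∑ j, cc j * ζ' i j) = 0 → ∀ j, cc j = 0 := by
      intro i cc hfix hsum0
      set u : F := ∑ j, cc j * ζ i (Fin.castLE (hle i) j) with hu
      have hσu : σ u = ∑ j, cc j * σ (ζ i (Fin.castLE (hle i) j)) := by
        rw [hu, map_sum]
        exact Finset.sum_congr rfl fun j _ => by rw [map_mul, hfix]
      have hueq : σ u * a i - c * u = 0 := by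
        rw [← hsum0, hσu, hu, Finset.sum_mul, Finset.mul_sum, ← Finset.sum_sub_distrib]
        refine Finset.sum_congr rfl fun j _ => ?_
        rw [hζ'def]
        ring
      have h1 : σ u * a i = c * u := sub_eq_zero.mp hueq
      by_cases hi : i = i₀
      · subst hi
        obtain ⟨lam, hlamfix, hulam⟩ : ∃ lam, σ lam = lam ∧ u = lam * ζl := by
          by_cases hu0 : u = 0
          · exact ⟨0, map_zero σ, by rw [hu0, zero_mul]⟩
          · refine ⟨u * ζl⁻¹, ?_, by field_simp⟩
            have h2 : σ u = σ ζl * ζl⁻¹ * u := by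
              rw [hc] at h1
              apply mul_right_cancel₀ (ha0 i)
              rw [h1]; ring
            rw [map_mul, map_inv₀, h2]
            field_simp
        have hext := hζ i
          (fun j => (if hj : (j : ℕ) < nv' i then cc ⟨j, hj⟩ else 0)
            + (if (j : ℕ) = k then -lam else 0)) ?_ ?_
        · intro j
          have h4 := hext (Fin.castLE (hle i) j)
          have hjk : ((Fin.castLE (hle i) j : Fin (nv i)) : ℕ) ≠ k := by
            have hlt : (j : ℕ) < k := lt_of_lt_of_le j.isLt (le_of_eq hnvk)
            simpa using Nat.ne_of_lt hlt
          rw [if_neg hjk, add_zero,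
            dif_pos (show ((Fin.castLE (hle i) j : Fin (nv i)) : ℕ) < nv' i from j.isLt)] at h4
          exact h4
        · intro j
          by_cases hj1 : (j : ℕ) < nv' i
          · rw [dif_pos hj1, if_neg (by omega), add_zero]
            exact hfix _
          · rw [dif_neg hj1]
            by_cases hj2 : (j : ℕ) = k <;> simp [hj2, hlamfix]
        · have hS1 : ∑ j : Fin (nv i),
              ((if hj : (j : ℕ) < nv' i then cc ⟨j, hj⟩ else 0)
                + (if (j : ℕ) = k then -lam else 0)) * ζ i j
              = (∑ j : Fin (nv i), (if hj : (j : ℕ) < nv' i then cc ⟨j, hj⟩ else 0) * ζ i j)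
                + ∑ j : Fin (nv i), (if (j : ℕ) = k then -lam else 0) * ζ i j := by
            rw [← Finset.sum_add_distrib]
            exact Finset.sum_congr rfl fun j _ => add_mul _ _ _
          have hS2 : ∑ j : Fin (nv i), (if (j : ℕ) = k then -lam else 0) * ζ i j
              = -lam * ζl := by
            rw [Finset.sum_eq_single (⟨k, hklt⟩ : Fin (nv i))]
            · simp [← hζl]
            · intro j _ hj
              have hne : (j : ℕ) ≠ k := fun hcc => hj (Fin.ext hcc)
              simp [hne]
            · simp
          rw [hS1, hS2, sum_drop (hle i) cc (ζ i), ← hu, hulam]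
          ring
      · -- i ≠ i₀ : u must vanish
        have hu0 : u = 0 := by
          by_contra hu0
          refine hconj i i₀ hi ⟨u * ζl⁻¹, mul_ne_zero hu0 (inv_ne_zero hζl0), ?_⟩
          have hσu0 : σ u ≠ 0 := fun h0 => hu0 (σ.injective (by rw [h0, map_zero]))
          rw [map_mul, map_inv₀]
          rw [hc] at h1
          field_simp
          field_simp at h1
          linear_combination h1
        have hext := hζ i
          (fun j => if hj : (j : ℕ) < nv' i then cc ⟨j, hj⟩ else 0) ?_ ?_
        · intro j
          have h4 := hext (Fin.castLE (hle i) j)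
          rw [dif_pos (show ((Fin.castLE (hle i) j : Fin (nv i)) : ℕ) < nv' i from j.isLt)] at h4
          exact h4
        · intro j
          by_cases hj1 : (j : ℕ) < nv' i <;> simp [hj1, hfix]
        · rw [sum_drop (hle i) cc (ζ i), ← hu]
          exact hu0
    have hn := IH g hg0 nv' ζ' hζ'indep hvanish' hsum'
    omega
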